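/- Fix β > 1. For each integer m ≥ 2, define L = ⌊ log((β−1)(m−1)+1) / log β ⌋ and the integer sequence a_ℓ = ⌈ (β^{ℓ−1} − 1)/(β − 1) + 1 ⌉ for ℓ = 1,...,L (with a₀ = 0), and define L_{m,a} = ∑_{ℓ=1}^L (a_ℓ − a_{ℓ−1})/a_ℓ. Then L_{m,a} = ((β−1)/(β log β)) · log m + O(1) as m → ∞; that is, there exists a constant C (depending only on β) such that | L_{m,a} − ((β−1)/(β log β)) log m | ≤ C for all m ≥ 2. -/

import Mathlib

/-- The geometrically increasing integer sequence `a_ℓ = ⌈(β^{ℓ−1} − 1)/(β − 1) + 1⌉` for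
`ℓ ≥ 1`, with the convention `a₀ = 0`. -/
noncomputable def aSeq (β : ℝ) : ℕ → ℕ
  | 0 => 0
  | (ℓ + 1) => ⌈(β ^ ℓ - 1) / (β - 1) + 1⌉₊

/-- The number of change points `L = ⌊log((β−1)(m−1)+1) / log β⌋`. -/
noncomputable def numKnots (β : ℝ) (m : ℕ) : ℕ :=
  ⌊Real.log ((β - 1) * ((m : ℝ) - 1) + 1) / Real.log β⌋₊

/-- The correction factor `L_{m,a} = ∑_{ℓ=1}^L (a_ℓ − a_{ℓ−1})/a_ℓ`. -/
noncomputable def corrFactor (β : ℝ) (m : ℕ) : ℝ :=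
  ∑ ℓ ∈ Finset.Icc 1 (numKnots β m),
    ((aSeq β ℓ : ℝ) - (aSeq β (ℓ - 1) : ℝ)) / (aSeq β ℓ : ℝ)

lemma aSeq_lb (β : ℝ) (hβ : 1 < β) (ℓ : ℕ) :
    (β ^ ℓ - 1) / (β - 1) + 1 ≤ (aSeq β (ℓ + 1) : ℝ) := by
  show _ ≤ ((⌈(β ^ ℓ - 1) / (β - 1) + 1⌉₊ : ℕ) : ℝ)
  exact Nat.le_ceil _

lemma xval_nonneg (β : ℝ) (hβ : 1 < β) (ℓ : ℕ) :
    (0 : ℝ) ≤ (β ^ ℓ - 1) / (β - 1) := by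
  have h1 : (1 : ℝ) ≤ β ^ ℓ := one_le_pow₀ hβ.le
  have h2 : (0 : ℝ) < β - 1 := by linarith
  exact div_nonneg (by linarith) h2.le

lemma aSeq_ub (β : ℝ) (hβ : 1 < β) (ℓ : ℕ) :
    (aSeq β (ℓ + 1) : ℝ) ≤ (β ^ ℓ - 1) / (β - 1) + 2 := by
  have h0 : (0 : ℝ) ≤ (β ^ ℓ - 1) / (β - 1) + 1 := by
    have := xval_nonneg β hβ ℓ; linarith
  have h := (Nat.ceil_lt_add_one h0).le
  show ((⌈(β ^ ℓ - 1) / (β - 1) + 1⌉₊ : ℕ) : ℝ) ≤ _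
  linarith

lemma aSeq_one_le (β : ℝ) (hβ : 1 < β) (ℓ : ℕ) :
    (1 : ℝ) ≤ (aSeq β (ℓ + 1) : ℝ) := by
  have := aSeq_lb β hβ ℓ
  have := xval_nonneg β hβ ℓ
  linarith

lemma aSeq_geo_lb (β : ℝ) (hβ : 1 < β) (ℓ : ℕ) :
    β ^ ℓ / (2 * (β + 1)) ≤ (aSeq β (ℓ + 1) : ℝ) := by
  have hlb := aSeq_lb β hβ ℓ
  have h2 : (0 : ℝ) < β - 1 := by linarith
  have hpos : (0 : ℝ) < 2 * (β + 1) := by linarith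
  rcases le_or_gt (β ^ ℓ) 2 with h | h
  · have h1 := aSeq_one_le β hβ ℓ
    have : β ^ ℓ / (2 * (β + 1)) ≤ 1 := by
      rw [div_le_one hpos]; linarith
    linarith
  · have key : β ^ ℓ / (2 * (β + 1)) ≤ (β ^ ℓ - 1) / (β - 1) := by
      rw [div_le_div_iff₀ hpos h2]
      nlinarith [pow_pos (show (0:ℝ) < β by linarith) ℓ]
    linarith

/-- Per-term bound: each summand differs from `(β-1)/β` by a geometrically small error. -/
lemma term_bound (β : ℝ) (hβ : 1 < β) (ℓ : ℕ) (hℓ : 1 ≤ ℓ) :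
    |((aSeq β ℓ : ℝ) - (aSeq β (ℓ - 1) : ℝ)) / (aSeq β ℓ : ℝ) - (β - 1) / β|
      ≤ (2 * β + 3) * (2 * (β + 1)) / β * (β⁻¹) ^ (ℓ - 1) := by
  have hβ0 : (0 : ℝ) < β := by linarith
  obtain ⟨k, rfl⟩ : ∃ k, ℓ = k + 1 := ⟨ℓ - 1, (Nat.succ_pred_eq_of_pos hℓ).symm⟩
  simp only [Nat.add_sub_cancel]
  match k with
  | 0 =>
    have ha1 : aSeq β 1 = 1 := by
      have : (β ^ 0 - 1) / (β - 1) + 1 = (1 : ℝ) := by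
        rw [pow_zero]; simp
      simp [aSeq, this]
    rw [ha1]
    simp only [aSeq, Nat.cast_zero, Nat.cast_one, pow_zero]
    rw [show ((1 : ℝ) - 0) / 1 - (β - 1) / β = 1 / β by field_simp; ring]
    rw [abs_of_nonneg (by positivity), mul_one]
    rw [div_le_div_iff₀ hβ0 hβ0]
    nlinarith [mul_pos hβ0 hβ0, mul_pos (mul_pos hβ0 hβ0) hβ0]
  | j + 1 =>
    set A : ℝ := (aSeq β (j + 2) : ℝ) with hA
    set B : ℝ := (aSeq β (j + 1) : ℝ) with hB
    have hAlb := aSeq_lb β hβ (j + 1)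
    have hAub := aSeq_ub β hβ (j + 1)
    have hBlb := aSeq_lb β hβ j
    have hBub := aSeq_ub β hβ j
    have hA1 : (1 : ℝ) ≤ A := aSeq_one_le β hβ (j + 1)
    have hApos : (0 : ℝ) < A := by linarith
    have hAgeo := aSeq_geo_lb β hβ (j + 1)
    have hpowpos : (0 : ℝ) < β ^ (j + 1) := pow_pos hβ0 _
    -- the key algebraic identity
    have hid : (A - B) / A - (β - 1) / β = (A - β * B) / (β * A) := by
      field_simp; ring
    rw [hid, abs_div, abs_of_pos (by positivity : (0:ℝ) < β * A)]
    -- bound |A - β B| ≤ 2β + 3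
    have hxrel : (β ^ (j + 1) - 1) / (β - 1) - β * ((β ^ j - 1) / (β - 1)) = 1 := by
      have h2 : (β : ℝ) - 1 ≠ 0 := by linarith
      field_simp
      ring
    have habs : |A - β * B| ≤ 2 * β + 3 := by
      rw [abs_le]
      constructor
      · nlinarith
      · nlinarith
    have hstep : |A - β * B| / (β * A) ≤ (2 * β + 3) / (β * A) := by
      apply div_le_div_of_nonneg_right habs (by positivity) |>.trans_eq rfl
    refine hstep.trans ?_
    have hinv : (β⁻¹ : ℝ) ^ (j + 1) = (β ^ (j + 1))⁻¹ := by
      rw [inv_pow]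
    have hgoal_eq : (2 * β + 3) * (2 * (β + 1)) / β * (β ^ (j + 1))⁻¹
        = ((2 * β + 3) * (2 * (β + 1))) / (β * β ^ (j + 1)) := by
      field_simp
    rw [hinv, hgoal_eq, div_le_div_iff₀ (by positivity) (by positivity)]
    have h1 : β ^ (j + 1) ≤ 2 * (β + 1) * A := by
      have := hAgeo
      rw [div_le_iff₀ (by positivity : (0:ℝ) < 2 * (β + 1))] at this
      linarith
    nlinarith [mul_le_mul_of_nonneg_left h1 (show (0:ℝ) ≤ (2 * β + 3) * β by positivity)]

/-- Bound on the geometric series of errors. -/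
lemma geo_sum_bound (β : ℝ) (hβ : 1 < β) (L : ℕ) :
    ∑ ℓ ∈ Finset.Icc 1 L, (β⁻¹ : ℝ) ^ (ℓ - 1) ≤ β / (β - 1) := by
  have hβ0 : (0 : ℝ) < β := by linarith
  have h1 : ∑ ℓ ∈ Finset.Icc 1 L, (β⁻¹ : ℝ) ^ (ℓ - 1)
      = ∑ j ∈ Finset.range L, (β⁻¹ : ℝ) ^ j := by
    rw [show Finset.Icc 1 L = Finset.Ico 1 (L + 1) by ext x; simp only [Finset.mem_Icc, Finset.mem_Ico]; omega]
    rw [Finset.sum_Ico_eq_sum_range]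
    simp
  rw [h1]
  have hne : (β⁻¹ : ℝ) ≠ 1 := by
    intro h
    have : β = 1 := by
      field_simp at h
      linarith
    linarith
  rw [geom_sum_eq hne]
  have hinvlt : (β⁻¹ : ℝ) < 1 := by
    rw [inv_lt_one_iff₀]; right; exact hβ
  have hinvpos : (0 : ℝ) < β⁻¹ := by positivity
  have hd : (β⁻¹ : ℝ) - 1 < 0 := by linarith
  have e : ((β⁻¹ : ℝ) ^ L - 1) / (β⁻¹ - 1) = (1 - (β⁻¹ : ℝ) ^ L) / (1 - β⁻¹) := by
    rw [← neg_sub ((β⁻¹ : ℝ) ^ L) 1, ← neg_sub (β⁻¹ : ℝ) 1, neg_div_neg_eq]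
  rw [e]
  have h1mβ : (0 : ℝ) < 1 - β⁻¹ := by linarith
  have hp1 : (β⁻¹ : ℝ) ^ L ≤ 1 := pow_le_one₀ hinvpos.le hinvlt.le
  have hp0 : (0 : ℝ) ≤ (β⁻¹ : ℝ) ^ L := by positivity
  calc (1 - (β⁻¹ : ℝ) ^ L) / (1 - β⁻¹) ≤ 1 / (1 - β⁻¹) := by
        gcongr
        linarith
    _ = β / (β - 1) := by
        rw [div_eq_div_iff h1mβ.ne' (by linarith : (β:ℝ) - 1 ≠ 0)]
        field_simp

theorem corrFactor_asymptotics (β : ℝ) (hβ : 1 < β) :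
    ∃ C : ℝ, ∀ m : ℕ, 2 ≤ m →
      |corrFactor β m - ((β - 1) / (β * Real.log β)) * Real.log m| ≤ C := by
  have hβ0 : (0 : ℝ) < β := by linarith
  have hlogβ : (0 : ℝ) < Real.log β := Real.log_pos hβ
  set K : ℝ := (2 * β + 3) * (2 * (β + 1)) / β with hK
  set C1 : ℝ := K * (β / (β - 1)) with hC1
  set c3 : ℝ := Real.log β + |Real.log ((β - 1) / 2)| with hc3
  set c : ℝ := (β - 1) / β with hc
  refine ⟨C1 + c * (1 + c3 / Real.log β), fun m hm => ?_⟩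
  have hm1 : (1 : ℝ) ≤ (m : ℝ) := by exact_mod_cast Nat.one_le_of_lt hm
  have hm2 : (2 : ℝ) ≤ (m : ℝ) := by exact_mod_cast hm
  set L : ℕ := numKnots β m with hL
  -- Step 1: |corrFactor - L * c| ≤ C1
  have step1 : |corrFactor β m - (L : ℝ) * c| ≤ C1 := by
    have hrw : corrFactor β m - (L : ℝ) * c
        = ∑ ℓ ∈ Finset.Icc 1 L,
            (((aSeq β ℓ : ℝ) - (aSeq β (ℓ - 1) : ℝ)) / (aSeq β ℓ : ℝ) - c) := by
      rw [corrFactor, Finset.sum_sub_distrib, Finset.sum_const, Nat.card_Icc]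
      simp [nsmul_eq_mul]
      rfl
    rw [hrw]
    calc |∑ ℓ ∈ Finset.Icc 1 L,
            (((aSeq β ℓ : ℝ) - (aSeq β (ℓ - 1) : ℝ)) / (aSeq β ℓ : ℝ) - c)|
        ≤ ∑ ℓ ∈ Finset.Icc 1 L,
            |((aSeq β ℓ : ℝ) - (aSeq β (ℓ - 1) : ℝ)) / (aSeq β ℓ : ℝ) - c| :=
          Finset.abs_sum_le_sum_abs _ _
      _ ≤ ∑ ℓ ∈ Finset.Icc 1 L, K * (β⁻¹) ^ (ℓ - 1) := by
          apply Finset.sum_le_sum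
          intro ℓ hℓ
          have h1 : 1 ≤ ℓ := (Finset.mem_Icc.mp hℓ).1
          exact term_bound β hβ ℓ h1
      _ = K * ∑ ℓ ∈ Finset.Icc 1 L, (β⁻¹) ^ (ℓ - 1) := by
          rw [Finset.mul_sum]
      _ ≤ C1 := by
          rw [hC1]
          apply mul_le_mul_of_nonneg_left (geo_sum_bound β hβ L)
          rw [hK]; positivity
  -- Step 2: |L * c - target| ≤ c * (1 + c3 / log β)
  set y : ℝ := Real.log ((β - 1) * ((m : ℝ) - 1) + 1) / Real.log β with hy
  have hargpos : (0 : ℝ) < (β - 1) * ((m : ℝ) - 1) + 1 := by nlinarith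
  have hy0 : (0 : ℝ) ≤ y := by
    apply div_nonneg _ hlogβ.le
    apply Real.log_nonneg
    nlinarith
  have hLy : |(L : ℝ) - y| ≤ 1 := by
    rw [abs_le]
    have h1 : (L : ℝ) ≤ y := Nat.floor_le hy0
    have h2 : y < (L : ℝ) + 1 := Nat.lt_floor_add_one y
    constructor <;> linarith
  have hlogdiff : |Real.log ((β - 1) * ((m : ℝ) - 1) + 1) - Real.log m| ≤ c3 := by
    have hub : (β - 1) * ((m : ℝ) - 1) + 1 ≤ β * m := by nlinarith
    have hlb : (β - 1) / 2 * m ≤ (β - 1) * ((m : ℝ) - 1) + 1 := by nlinarith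
    have hmpos : (0 : ℝ) < m := by linarith
    have hu : Real.log ((β - 1) * ((m : ℝ) - 1) + 1) ≤ Real.log β + Real.log m := by
      calc Real.log ((β - 1) * ((m : ℝ) - 1) + 1) ≤ Real.log (β * m) :=
            Real.log_le_log hargpos hub
        _ = Real.log β + Real.log m := Real.log_mul (by linarith) (by linarith)
    have hl : Real.log ((β - 1) / 2) + Real.log m
        ≤ Real.log ((β - 1) * ((m : ℝ) - 1) + 1) := by
      calc Real.log ((β - 1) / 2) + Real.log m = Real.log ((β - 1) / 2 * m) :=
            (Real.log_mul (by intro h; nlinarith [h]; ) (by linarith)).symm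
        _ ≤ Real.log ((β - 1) * ((m : ℝ) - 1) + 1) := by
            apply Real.log_le_log _ hlb
            nlinarith
    rw [abs_le]
    constructor
    · have : -|Real.log ((β - 1) / 2)| ≤ Real.log ((β - 1) / 2) := neg_abs_le _
      rw [hc3]; linarith
    · rw [hc3]
      have : (0 : ℝ) ≤ |Real.log ((β - 1) / 2)| := abs_nonneg _
      linarith
  have step2 : |(L : ℝ) * c - (β - 1) / (β * Real.log β) * Real.log m|
      ≤ c * (1 + c3 / Real.log β) := by
    have hrw : (β - 1) / (β * Real.log β) * Real.log m = c * (Real.log m / Real.log β) := by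
      rw [hc]; field_simp
    rw [hrw, mul_comm (L : ℝ) c, ← mul_sub, abs_mul, abs_of_nonneg (show (0:ℝ) ≤ c by rw [hc]; exact div_nonneg (by linarith) hβ0.le)]
    apply mul_le_mul_of_nonneg_left _ (show (0:ℝ) ≤ c by rw [hc]; exact div_nonneg (by linarith) hβ0.le)
    calc |(L : ℝ) - Real.log m / Real.log β|
        ≤ |(L : ℝ) - y| + |y - Real.log m / Real.log β| := abs_sub_le _ _ _
      _ ≤ 1 + c3 / Real.log β := by
          apply add_le_add hLy
          rw [hy, div_sub_div_same, abs_div, abs_of_pos hlogβ]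
          exact div_le_div_of_nonneg_right hlogdiff hlogβ.le |>.trans_eq rfl
  calc |corrFactor β m - (β - 1) / (β * Real.log β) * Real.log m|
      ≤ |corrFactor β m - (L : ℝ) * c|
        + |(L : ℝ) * c - (β - 1) / (β * Real.log β) * Real.log m| := abs_sub_le _ _ _
    _ ≤ C1 + c * (1 + c3 / Real.log β) := add_le_add step1 step2
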